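/- For the Hermite/Laguerre GPAH-CS, the expectation ⟨N_m⟩ = (m+p) · ₂F₂(1+p, m+p+1; 1, m+p; x) / ₁F₁(1+p; 1; x), where x = |cz|². -/

import Mathlib

/-- Pochhammer (rising factorial) symbol `(a)_n`. -/
noncomputable def poch (a : ℝ) (n : ℕ) : ℝ := Polynomial.eval a (ascPochhammer ℝ n)

/-- `₁F₁(1+p; 1; x)`. -/
noncomputable def F11 (p : ℕ) (x : ℝ) : ℝ :=
  ∑' n : ℕ, poch (1 + p) n / poch 1 n * x ^ n / Nat.factorial n

/-- `₂F₂(1+p, m+p+1; 1, m+p; x)`. -/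
noncomputable def F22 (m p : ℕ) (x : ℝ) : ℝ :=
  ∑' n : ℕ, poch (1 + p) n * poch ((m : ℝ) + p + 1) n
      / (poch 1 n * poch ((m : ℝ) + p) n) * x ^ n / Nat.factorial n

lemma poch_succ (a : ℝ) (n : ℕ) : poch a (n+1) = poch a n * (a + n) := by
  simp [poch, ascPochhammer_succ_right, Polynomial.eval_mul]

lemma poch_one (n : ℕ) : poch 1 n = n.factorial := by
  induction n with
  | zero => simp [poch]
  | succ n ih => rw [poch_succ, ih]; push_cast [Nat.factorial_succ]; ring

lemma poch_pos {a : ℝ} (ha : 0 < a) (n : ℕ) : 0 < poch a n := by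
  induction n with
  | zero => simp [poch]
  | succ n ih => rw [poch_succ]; positivity

lemma poch_fact (p n : ℕ) : poch (1 + p) n * p.factorial = (n + p).factorial := by
  induction n with
  | zero => simp [poch]
  | succ n ih =>
    rw [poch_succ, mul_right_comm, ih]
    have : n + 1 + p = (n + p) + 1 := by ring
    rw [this, Nat.factorial_succ]; push_cast; ring

lemma poch_shift (a : ℝ) (n : ℕ) : a * poch (a + 1) n = poch a n * (a + n) := by
  have h1 : poch a (n+1) = a * poch (a+1) n := by
    simp [poch, ascPochhammer_succ_left, Polynomial.eval_mul, Polynomial.eval_comp]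
  rw [← h1, poch_succ]

/-- For the Hermite/Laguerre GPAH-CS,
`⟨N_m⟩ = 𝒩_p²(x) ∑_n (m+n+p) x^n Γ(n+p+1)/Γ(n+1)²` with
`𝒩_p(x)^{-2} = Γ(p+1) ₁F₁(1+p;1;x)` equals
`(m+p) ₂F₂(1+p, m+p+1; 1, m+p; x) / ₁F₁(1+p; 1; x)`. -/
theorem number_expectation_hypergeometric (m p : ℕ) (hmp : 1 ≤ m + p) (x : ℝ) (hx : 0 ≤ x) :
    (∑' n : ℕ, ((m : ℝ) + n + p) * x ^ n * Real.Gamma (n + p + 1) / Real.Gamma (n + 1) ^ 2)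
        / (Real.Gamma (p + 1) * F11 p x)
      = ((m : ℝ) + p) * F22 m p x / F11 p x := by
  have hmpR : (0:ℝ) < (m:ℝ) + p := by
    have : (1:ℝ) ≤ (m:ℝ) + p := by exact_mod_cast hmp
    linarith
  have hterm : ∀ n : ℕ,
      ((m : ℝ) + n + p) * x ^ n * Real.Gamma (n + p + 1) / Real.Gamma (n + 1) ^ 2
        = Real.Gamma (p + 1) * (((m : ℝ) + p) *
          (poch (1 + p) n * poch ((m : ℝ) + p + 1) n
            / (poch 1 n * poch ((m : ℝ) + p) n) * x ^ n / Nat.factorial n)) := by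
    intro n
    have e1 : ((n:ℝ) + p + 1) = ((n + p : ℕ) : ℝ) + 1 := by push_cast; ring
    rw [e1, Real.Gamma_nat_eq_factorial, Real.Gamma_nat_eq_factorial,
      Real.Gamma_nat_eq_factorial, poch_one]
    have hQ : (0:ℝ) < poch ((m:ℝ) + p) n := poch_pos hmpR n
    have hfac : ((n.factorial : ℝ)) ≠ 0 := by exact_mod_cast n.factorial_ne_zero
    field_simp
    linear_combination (-1:ℝ) *
      ((x ^ n * ((m:ℝ) + p) * poch ((m:ℝ) + p + 1) n) * poch_fact p n
      + (x ^ n * ((n + p).factorial : ℝ)) * poch_shift ((m:ℝ) + p) n)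
  rw [tsum_congr hterm, tsum_mul_left, tsum_mul_left]
  have hF : (∑' n : ℕ, poch (1 + (p:ℝ)) n * poch ((m : ℝ) + p + 1) n
      / (poch 1 n * poch ((m : ℝ) + p) n) * x ^ n / Nat.factorial n) = F22 m p x := rfl
  rw [hF]
  have hG : Real.Gamma ((p:ℝ) + 1) ≠ 0 := by
    rw [Real.Gamma_nat_eq_factorial]; exact_mod_cast p.factorial_ne_zero
  rw [mul_div_mul_left _ _ hG]
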